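/- Let N ≥ 1 and let λ = (λ_1, …, λ_m) be a partition with all parts positive. Then the differential operator representing Tr(a†a²), namely D₁₂ : f ↦ Σ_{i,j,k=1}^N x_{ij} ∂²f/(∂x_{kj} ∂x_{ik}), acts on the multi-trace polynomial p_λ by D₁₂ p_λ = Σ_{j=1}^m λ_j Σ_{s=1}^{λ_j−1} p_{λ_j−s} · p_{s−1} · p_{λ ∖ λ_j} + 2 Σ_{1 ≤ j < l ≤ m} λ_j λ_l · p_{λ_j+λ_l−1} · p_{λ ∖ {λ_j, λ_l}}, where λ ∖ λ_j means λ with the part λ_j deleted, and the factor p_0 = N appears in the s = 1 terms. -/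

import Mathlib

open MvPolynomial

/-- The matrix of indeterminates `X`, with entries `x_{ij}` in the polynomial ring
`ℝ[x_{ij} : 1 ≤ i,j ≤ N]`. -/
noncomputable def Xmat (N : ℕ) : Matrix (Fin N) (Fin N) (MvPolynomial (Fin N × Fin N) ℝ) :=
  fun i j => MvPolynomial.X (i, j)

/-- The trace power `p_k = Tr(X^k)`; in particular `p_0 = N`. -/
noncomputable def trPow (N : ℕ) (k : ℕ) : MvPolynomial (Fin N × Fin N) ℝ :=
  Matrix.trace (Xmat N ^ k)

/-- The multi-trace polynomial `p_λ = p_{λ_1} ⋯ p_{λ_m}` attached to a partition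
`λ = (λ_1, …, λ_m)` (given as a list of parts). -/
noncomputable def multiTrace (N : ℕ) (lam : List ℕ) : MvPolynomial (Fin N × Fin N) ℝ :=
  (lam.map (trPow N)).prod

/-- The differential operator representing `Tr(a† a²)`:
`D₁₂ f = Σ_{i,j,k} x_{ij} ∂²f/(∂x_{kj} ∂x_{ik})`. -/
noncomputable def D12 (N : ℕ) (f : MvPolynomial (Fin N × Fin N) ℝ) :
    MvPolynomial (Fin N × Fin N) ℝ :=
  ∑ i : Fin N, ∑ j : Fin N, ∑ k : Fin N,
    MvPolynomial.X (i, j) * pderiv (k, j) (pderiv (i, k) f)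





lemma pderiv_Xmat (N : ℕ) (a b p q : Fin N) :
    pderiv (a, b) (Xmat N p q) = if p = a ∧ q = b then 1 else 0 := by
  simp [Xmat, pderiv_X, Pi.single_apply, Prod.ext_iff]

lemma pderiv_pow_succ (N m : ℕ) (a b p q : Fin N) :
    pderiv (a, b) ((Xmat N ^ (m + 1)) p q) =
      ∑ r ∈ Finset.range (m + 1), (Xmat N ^ r) p a * (Xmat N ^ (m - r)) b q := by
  induction m generalizing q with
  | zero => simp [pow_one, pderiv_Xmat, Matrix.one_apply]; split_ifs with h <;> simp_all [eq_comm]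
  | succ m ih =>
    rw [pow_succ, Matrix.mul_apply, map_sum]
    have step : ∀ c : Fin N, pderiv (a,b) ((Xmat N ^ (m+1)) p c * Xmat N c q)
        = (∑ r ∈ Finset.range (m + 1), (Xmat N ^ r) p a * (Xmat N ^ (m - r)) b c) * Xmat N c q
          + (Xmat N ^ (m+1)) p c * (if c = a ∧ q = b then 1 else 0) := by
      intro c; rw [pderiv_mul, ih, pderiv_Xmat]
    rw [Finset.sum_congr rfl fun c _ => step c, Finset.sum_add_distrib, Finset.sum_range_succ]
    congr 1
    · have key : ∀ c : Fin N, (∑ r ∈ Finset.range (m + 1), (Xmat N ^ r) p a * (Xmat N ^ (m - r)) b c) * Xmat N c q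
          = ∑ r ∈ Finset.range (m + 1), (Xmat N ^ r) p a * ((Xmat N ^ (m - r)) b c * Xmat N c q) := by
        intro c; rw [Finset.sum_mul]; exact Finset.sum_congr rfl fun r _ => by ring
      rw [Finset.sum_congr rfl fun c _ => key c, Finset.sum_comm]
      refine Finset.sum_congr rfl fun r hr => ?_
      rw [← Finset.mul_sum]
      congr 1
      have := Finset.mem_range.mp hr
      rw [show (m + 1 - r) = (m - r) + 1 by omega, pow_succ, Matrix.mul_apply]
    · simp only [Nat.sub_self, pow_zero, Matrix.one_apply]
      by_cases hqb : q = b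
      · simp [hqb, mul_ite, mul_one, mul_zero]
      · simp [hqb, Ne.symm hqb]

lemma pderiv_trPow_succ (N k : ℕ) (a b : Fin N) :
    pderiv (a, b) (trPow N (k + 1)) = (k + 1 : ℕ) * (Xmat N ^ k) b a := by
  rw [trPow, Matrix.trace]
  simp only [Matrix.diag]
  rw [map_sum, Finset.sum_congr rfl fun p _ => pderiv_pow_succ N k a b p p, Finset.sum_comm]
  have : ∀ r ∈ Finset.range (k+1), ∑ p : Fin N, (Xmat N ^ r) p a * (Xmat N ^ (k - r)) b p
      = (Xmat N ^ k) b a := by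
    intro r hr
    have hrk := Finset.mem_range.mp hr
    rw [Finset.sum_congr rfl fun p _ => mul_comm _ _, ← Matrix.mul_apply, ← pow_add,
      show (k - r) + r = k by omega]
  rw [Finset.sum_congr rfl this, Finset.sum_const, Finset.card_range, nsmul_eq_mul]



lemma triple_factor {M : Type*} [CommRing M] {N : ℕ} (c : M) (A : Fin N → M) (B : Fin N → Fin N → M) :
    ∑ i : Fin N, ∑ j : Fin N, ∑ k : Fin N, c * (A k * B i j) = c * ((∑ k : Fin N, A k) * (∑ i : Fin N, ∑ j : Fin N, B i j)) := by
  simp only [Finset.mul_sum, Finset.sum_mul]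

lemma sum4_comm {α : Type*} [AddCommMonoid α] {N m : ℕ} (f : Fin N → Fin N → Fin N → ℕ → α) :
    ∑ i : Fin N, ∑ j : Fin N, ∑ k : Fin N, ∑ r ∈ Finset.range m, f i j k r
      = ∑ r ∈ Finset.range m, ∑ i : Fin N, ∑ j : Fin N, ∑ k : Fin N, f i j k r := by
  rw [show (∑ i : Fin N, ∑ j : Fin N, ∑ k : Fin N, ∑ r ∈ Finset.range m, f i j k r)
      = ∑ i : Fin N, ∑ j : Fin N, ∑ r ∈ Finset.range m, ∑ k : Fin N, f i j k r from
    Finset.sum_congr rfl fun i _ => Finset.sum_congr rfl fun j _ => Finset.sum_comm]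
  rw [show (∑ i : Fin N, ∑ j : Fin N, ∑ r ∈ Finset.range m, ∑ k : Fin N, f i j k r)
      = ∑ i : Fin N, ∑ r ∈ Finset.range m, ∑ j : Fin N, ∑ k : Fin N, f i j k r from
    Finset.sum_congr rfl fun i _ => Finset.sum_comm]
  exact Finset.sum_comm

lemma sum_X_mul_pow (N u : ℕ) :
    ∑ i : Fin N, ∑ j : Fin N, MvPolynomial.X (i, j) * (Xmat N ^ u) j i = trPow N (u + 1) := by
  rw [trPow, Matrix.trace]
  simp only [Matrix.diag]
  refine (Finset.sum_congr rfl fun i _ => ?_).symm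
  rw [pow_succ', Matrix.mul_apply]
  rfl

lemma icc_to_range {M : Type*} [AddCommMonoid M] (m : ℕ) (f : ℕ → M) :
    ∑ s ∈ Finset.Icc 1 (m + 1), f s = ∑ r ∈ Finset.range (m + 1), f (r + 1) := by
  rw [show Finset.Icc 1 (m+1) = Finset.Ico 1 (m+2) by rfl, Finset.sum_Ico_eq_sum_range]
  simp [add_comm]

lemma D12_trPow (N n : ℕ) :
    D12 N (trPow N n) = (n : MvPolynomial (Fin N × Fin N) ℝ) *
      ∑ s ∈ Finset.Icc 1 (n - 1), trPow N (n - s) * trPow N (s - 1) := by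
  match n with
  | 0 => simp [D12, trPow, Matrix.trace, Matrix.diag, Matrix.one_apply]
  | 1 =>
    have h2 : ∀ i j k : Fin N, pderiv (k,j) (pderiv (i,k) (trPow N 1)) = 0 := by
      intro i j k
      rw [pderiv_trPow_succ]
      simp [Matrix.one_apply]
      split_ifs <;> simp
    simp [D12, h2]
  | (t+2) =>
    have hd : ∀ i j k : Fin N, pderiv (k,j) (pderiv (i,k) (trPow N (t+2)))
        = ∑ r ∈ Finset.range (t+1),
            ((t+2 : ℕ) : MvPolynomial (Fin N × Fin N) ℝ) * ((Xmat N ^ r) k k * (Xmat N ^ (t - r)) j i) := by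
      intro i j k
      rw [pderiv_trPow_succ, pderiv_mul, pderiv_pow_succ]
      norm_num
      rw [Finset.mul_sum]
      exact Finset.sum_congr rfl fun r _ => by ring
    unfold D12
    simp only [hd, Finset.mul_sum]
    rw [show (∑ i : Fin N, ∑ j : Fin N, ∑ k : Fin N, ∑ r ∈ Finset.range (t+1),
        MvPolynomial.X (i,j) * (((t+2 : ℕ) : MvPolynomial (Fin N × Fin N) ℝ) * ((Xmat N ^ r) k k * (Xmat N ^ (t - r)) j i)))
      = ∑ r ∈ Finset.range (t+1), ∑ i : Fin N, ∑ j : Fin N, ∑ k : Fin N,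
        ((t+2 : ℕ) : MvPolynomial (Fin N × Fin N) ℝ) * ((Xmat N ^ r) k k * (MvPolynomial.X (i,j) * (Xmat N ^ (t - r)) j i)) from by
      rw [sum4_comm (f := fun i j k r => MvPolynomial.X (i,j) * (((t+2 : ℕ) : MvPolynomial (Fin N × Fin N) ℝ) * ((Xmat N ^ r) k k * (Xmat N ^ (t - r)) j i)))]
      exact Finset.sum_congr rfl fun r _ => Finset.sum_congr rfl fun i _ =>
        Finset.sum_congr rfl fun j _ => Finset.sum_congr rfl fun k _ => by ring]
    rw [Finset.sum_congr rfl fun r hr => triple_factor _ _ _]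
    rw [show ((t+2 : ℕ) - 1) = t + 1 by omega, icc_to_range]
    refine Finset.sum_congr rfl fun r hr => ?_
    have hrt := Finset.mem_range.mp hr
    rw [show ∑ k : Fin N, (Xmat N ^ r) k k = trPow N r by simp [trPow, Matrix.trace, Matrix.diag],
      sum_X_mul_pow, show t + 2 - (r+1) = t - r + 1 by omega, show r + 1 - 1 = r by omega]
    ring

noncomputable def crossD (N : ℕ) (f g : MvPolynomial (Fin N × Fin N) ℝ) :
    MvPolynomial (Fin N × Fin N) ℝ :=
  ∑ i : Fin N, ∑ j : Fin N, ∑ k : Fin N,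
    MvPolynomial.X (i, j) *
      (pderiv (i, k) f * pderiv (k, j) g + pderiv (k, j) f * pderiv (i, k) g)

lemma D12_mul (N : ℕ) (f g : MvPolynomial (Fin N × Fin N) ℝ) :
    D12 N (f * g) = D12 N f * g + f * D12 N g + crossD N f g := by
  unfold D12 crossD
  simp only [pderiv_mul, map_add, Finset.sum_mul, Finset.mul_sum, ← Finset.sum_add_distrib]
  refine Finset.sum_congr rfl fun i _ => Finset.sum_congr rfl fun j _ =>
    Finset.sum_congr rfl fun k _ => ?_
  ring

lemma crossD_mul_right (N : ℕ) (f g h : MvPolynomial (Fin N × Fin N) ℝ) :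
    crossD N f (g * h) = crossD N f g * h + g * crossD N f h := by
  unfold crossD
  simp only [pderiv_mul, Finset.sum_mul, Finset.mul_sum, ← Finset.sum_add_distrib]
  refine Finset.sum_congr rfl fun i _ => Finset.sum_congr rfl fun j _ =>
    Finset.sum_congr rfl fun k _ => ?_
  ring

lemma pderiv_trPow_zero (N : ℕ) (v : Fin N × Fin N) : pderiv v (trPow N 0) = 0 := by
  simp [trPow, Matrix.trace, Matrix.diag, Matrix.one_apply]

lemma sum_X_pow_pow (N a b : ℕ) :
    ∑ i : Fin N, ∑ j : Fin N, ∑ k : Fin N,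
        MvPolynomial.X (i,j) * ((Xmat N ^ a) k i * (Xmat N ^ b) j k)
      = trPow N (a + b + 1) := by
  rw [trPow, Matrix.trace]
  simp only [Matrix.diag]
  rw [show a + b + 1 = 1 + b + a by omega, pow_add, pow_add, pow_one]
  refine (Finset.sum_congr rfl fun i _ => ?_).symm
  rw [Matrix.mul_apply]
  rw [Finset.sum_congr rfl fun k (_ : k ∈ Finset.univ) => by rw [Matrix.mul_apply, Finset.sum_mul]]
  rw [Finset.sum_comm]
  refine Finset.sum_congr rfl fun j _ => Finset.sum_congr rfl fun k _ => ?_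
  show Xmat N i j * (Xmat N ^ b) j k * (Xmat N ^ a) k i = _
  rw [show Xmat N i j = MvPolynomial.X (i,j) from rfl]
  ring

lemma sum_X_pow_pow' (N a b : ℕ) :
    ∑ i : Fin N, ∑ j : Fin N,
        MvPolynomial.X (i,j) * ∑ k : Fin N, (Xmat N ^ a) k i * (Xmat N ^ b) j k
      = trPow N (a + b + 1) := by
  rw [← sum_X_pow_pow N a b]
  exact Finset.sum_congr rfl fun i _ => Finset.sum_congr rfl fun j _ => Finset.mul_sum ..

lemma crossD_trPow (N n m : ℕ) :
    crossD N (trPow N n) (trPow N m)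
      = 2 * (n : MvPolynomial (Fin N × Fin N) ℝ) * (m : MvPolynomial (Fin N × Fin N) ℝ) *
          trPow N (n + m - 1) := by
  match n, m with
  | 0, m => simp [crossD, pderiv_trPow_zero]
  | n+1, 0 => simp [crossD, pderiv_trPow_zero]
  | a+1, b+1 =>
    unfold crossD
    simp only [pderiv_trPow_succ]
    have h1 : ∀ i j k : Fin N,
        MvPolynomial.X (i,j) *
          ((((a+1 : ℕ) : MvPolynomial (Fin N × Fin N) ℝ) * (Xmat N ^ a) k i) *
              (((b+1 : ℕ) : MvPolynomial (Fin N × Fin N) ℝ) * (Xmat N ^ b) j k)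
            + (((a+1 : ℕ) : MvPolynomial (Fin N × Fin N) ℝ) * (Xmat N ^ a) j k) *
              (((b+1 : ℕ) : MvPolynomial (Fin N × Fin N) ℝ) * (Xmat N ^ b) k i))
        = (((a+1 : ℕ) : MvPolynomial (Fin N × Fin N) ℝ) * ((b+1 : ℕ) : MvPolynomial (Fin N × Fin N) ℝ)) *
            (MvPolynomial.X (i,j) * ((Xmat N ^ a) k i * (Xmat N ^ b) j k))
          + (((a+1 : ℕ) : MvPolynomial (Fin N × Fin N) ℝ) * ((b+1 : ℕ) : MvPolynomial (Fin N × Fin N) ℝ)) *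
            (MvPolynomial.X (i,j) * ((Xmat N ^ b) k i * (Xmat N ^ a) j k)) := by
      intro i j k; ring
    simp only [h1, Finset.sum_add_distrib, ← Finset.mul_sum]
    rw [sum_X_pow_pow', sum_X_pow_pow', show b + a + 1 = a + b + 1 by omega,
      show a + 1 + (b + 1) - 1 = a + b + 1 by omega]
    push_cast
    ring


lemma multiTrace_cons (N a : ℕ) (T : List ℕ) :
    multiTrace N (a :: T) = trPow N a * multiTrace N T := by simp [multiTrace]

lemma crossD_one (N : ℕ) (f : MvPolynomial (Fin N × Fin N) ℝ) : crossD N f 1 = 0 := by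
  simp [crossD]

lemma D12_one (N : ℕ) : D12 N 1 = 0 := by simp [D12]

lemma crossD_multiTrace (N : ℕ) (f : MvPolynomial (Fin N × Fin N) ℝ) (L : List ℕ) :
    crossD N f (multiTrace N L) =
      ∑ t : Fin L.length, crossD N f (trPow N (L.get t)) * multiTrace N (L.eraseIdx t) := by
  induction L with
  | nil => simp [multiTrace, crossD_one]
  | cons a T ih =>
    rw [multiTrace_cons, crossD_mul_right, ih]
    simp only [List.length_cons]
    rw [Fin.sum_univ_succ]
    simp only [List.get_eq_getElem, Fin.val_succ, Fin.val_zero, List.getElem_cons_zero,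
      List.getElem_cons_succ, List.eraseIdx_cons_zero, List.eraseIdx_cons_succ, multiTrace_cons]
    rw [Finset.mul_sum]
    congr 1
    exact Finset.sum_congr rfl fun t _ => by ring


/-- Theorem 1(iii) of the paper (unnormalized form): for a partition `λ` with all parts
positive,
`D₁₂ p_λ = Σ_j λ_j Σ_{s=1}^{λ_j−1} p_{λ_j−s} p_{s−1} p_{λ∖λ_j}
  + 2 Σ_{j<l} λ_j λ_l p_{λ_j+λ_l−1} p_{λ∖{λ_j,λ_l}}`,
where `λ ∖ λ_j` deletes the part `λ_j`, and the factor `p_0 = N` appears in the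
`s = 1` terms. -/
theorem trace_adag_a2_on_multiTrace (N : ℕ) (hN : 1 ≤ N) (lam : List ℕ)
    (hsort : lam.Pairwise (· ≥ ·)) (hpos : ∀ p ∈ lam, 0 < p) :
    D12 N (multiTrace N lam) =
      (∑ j : Fin lam.length,
        (lam.get j : MvPolynomial (Fin N × Fin N) ℝ) *
          ∑ s ∈ Finset.Icc 1 (lam.get j - 1),
            trPow N (lam.get j - s) * trPow N (s - 1) * multiTrace N (lam.eraseIdx j))
      + 2 * ∑ j : Fin lam.length, ∑ l : Fin lam.length,
          if (j : ℕ) < (l : ℕ) then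
            (lam.get j : MvPolynomial (Fin N × Fin N) ℝ) * (lam.get l) *
              trPow N (lam.get j + lam.get l - 1) *
              multiTrace N ((lam.eraseIdx l).eraseIdx j)
          else 0 := by
  clear hN hsort hpos
  induction lam with
  | nil => simp [multiTrace, D12_one]
  | cons a T ih =>
    rw [multiTrace_cons, D12_mul, D12_trPow, ih, crossD_multiTrace]
    simp only [crossD_trPow, List.length_cons, Fin.sum_univ_succ, List.get_eq_getElem,
      Fin.val_succ, Fin.val_zero, List.getElem_cons_zero, List.getElem_cons_succ,
      List.eraseIdx_cons_zero, List.eraseIdx_cons_succ, multiTrace_cons,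
      lt_self_iff_false, if_false, Nat.not_lt_zero, if_true, Nat.zero_lt_succ,
      add_lt_add_iff_right]
    simp only [Finset.mul_sum, Finset.sum_mul, mul_ite, mul_zero, zero_add, add_zero]
    ring_nf
    have h1 : trPow N a *
          ∑ x : Fin T.length, ∑ x_1 ∈ Finset.Icc 1 (T[(x:ℕ)] - 1),
            (↑T[(x:ℕ)] : MvPolynomial (Fin N × Fin N) ℝ) * trPow N (T[(x:ℕ)] - x_1) * trPow N (x_1 - 1) * multiTrace N (T.eraseIdx (x:ℕ))
        = ∑ x : Fin T.length, ∑ x_1 ∈ Finset.Icc 1 (T[(x:ℕ)] - 1),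
            trPow N a * (↑T[(x:ℕ)] : MvPolynomial (Fin N × Fin N) ℝ) * multiTrace N (T.eraseIdx (x:ℕ)) * trPow N (T[(x:ℕ)] - x_1) * trPow N (x_1 - 1) := by
      rw [Finset.mul_sum]
      refine Finset.sum_congr rfl fun x _ => ?_
      rw [Finset.mul_sum]
      exact Finset.sum_congr rfl fun s _ => by ring
    have h2 : trPow N a * ∑ x : Fin T.length, ∑ x_1 : Fin T.length,
          (if (x:ℕ) < (x_1:ℕ) then (↑T[(x:ℕ)] : MvPolynomial (Fin N × Fin N) ℝ) * ↑T[(x_1:ℕ)] * trPow N (T[(x:ℕ)] + T[(x_1:ℕ)] - 1) * multiTrace N ((T.eraseIdx (x_1:ℕ)).eraseIdx (x:ℕ)) * 2 else 0)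
        = (∑ x : Fin T.length, ∑ x_1 : Fin T.length,
            if (x:ℕ) < (x_1:ℕ) then (↑T[(x:ℕ)] : MvPolynomial (Fin N × Fin N) ℝ) * ↑T[(x_1:ℕ)] * trPow N (T[(x:ℕ)] + T[(x_1:ℕ)] - 1) * trPow N a * multiTrace N ((T.eraseIdx (x_1:ℕ)).eraseIdx (x:ℕ)) else 0) * 2 := by
      rw [Finset.mul_sum, Finset.sum_mul]
      refine Finset.sum_congr rfl fun x _ => ?_
      rw [Finset.mul_sum, Finset.sum_mul]
      refine Finset.sum_congr rfl fun y _ => ?_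
      split_ifs <;> ring
    have h3 : (∑ x : Fin T.length, (↑a : MvPolynomial (Fin N × Fin N) ℝ) * ↑T[(x:ℕ)] * trPow N (a + T[(x:ℕ)] - 1) * multiTrace N (T.eraseIdx (x:ℕ)) * 2)
        = (∑ x : Fin T.length, (↑a : MvPolynomial (Fin N × Fin N) ℝ) * ↑T[(x:ℕ)] * trPow N (a + T[(x:ℕ)] - 1) * multiTrace N (T.eraseIdx (x:ℕ))) * 2 := by
      rw [Finset.sum_mul]
    rw [h1, h2, h3]
    ring
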